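/- (Fetching lemma.) Let k ≥ 1 and let φ be a Boolean function on V = {0,...,k} such that #φ ≠ |eul(φ)|. Then there exist satisfying valuations ν, ν' of φ with (−1)^{|ν|} ≠ (−1)^{|ν'|} and a simple path ν = ν_0 − ν_1 − ... − ν_n − ν_{n+1} = ν' from ν to ν' in the hypercube graph G_V (hence with n even) such that ν_i ∉ sat(φ) for all 1 ≤ i ≤ n. -/

import Mathlib

open scoped Classical

/-- Flip the membership of variable `l` in valuation `ν`. -/
def flipV {k : ℕ} (ν : Finset (Fin (k + 1))) (l : Fin (k + 1)) : Finset (Fin (k + 1)) :=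
  if l ∈ ν then ν.erase l else insert l ν

lemma flipV_flipV {k : ℕ} (ν : Finset (Fin (k + 1))) (l : Fin (k + 1)) :
    flipV (flipV ν l) l = ν := by
  unfold flipV
  by_cases h : l ∈ ν
  · simp [h, Finset.insert_erase h]
  · simp [h, Finset.erase_insert h]

lemma flipV_ne {k : ℕ} (ν : Finset (Fin (k + 1))) (l : Fin (k + 1)) :
    flipV ν l ≠ ν := by
  unfold flipV
  by_cases h : l ∈ ν
  · simp only [h, if_true]
    intro he
    exact (Finset.notMem_erase l ν) (he.symm ▸ h)
  · simp only [h, if_false]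
    intro he
    exact h (he ▸ Finset.mem_insert_self l ν)

/-- The set of satisfying valuations of a Boolean function on `V = {0,...,k}`. -/
def satSet {k : ℕ} (φ : Finset (Fin (k + 1)) → Bool) : Finset (Finset (Fin (k + 1))) :=
  Finset.univ.filter (fun ν => φ ν = true)

/-- The Euler characteristic of a Boolean function: `Σ_{ν ⊨ φ} (-1)^{|ν|}`. -/
def eul {k : ℕ} (φ : Finset (Fin (k + 1)) → Bool) : ℤ :=
  ∑ ν ∈ satSet φ, (-1 : ℤ) ^ ν.card

/-- The hypercube graph `G_V` on the valuations of `V = {0,...,k}`: there is an edge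
between `ν` and `ν^(l)` for every valuation `ν` and variable `l`. -/
def hypercube (k : ℕ) : SimpleGraph (Finset (Fin (k + 1))) where
  Adj ν μ := ∃ l, μ = flipV ν l
  symm := by
    constructor
    rintro ν μ ⟨l, rfl⟩
    exact ⟨l, (flipV_flipV ν l).symm⟩
  loopless := by
    constructor
    rintro ν ⟨l, h⟩
    exact flipV_ne ν l h.symm


lemma mem_flipV {k : ℕ} (ν : Finset (Fin (k + 1))) (l x : Fin (k + 1)) :
    x ∈ flipV ν l ↔ (if x = l then l ∉ ν else x ∈ ν) := by
  unfold flipV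
  by_cases h : l ∈ ν <;> by_cases hx : x = l <;>
    simp [h, hx, Finset.mem_erase, Finset.mem_insert]

lemma hypercube_reachable {k : ℕ} (a b : Finset (Fin (k + 1))) :
    (hypercube k).Reachable a b := by
  generalize hn : (symmDiff a b).card = n
  induction n generalizing a b with
  | zero =>
    have he : symmDiff a b = ∅ := Finset.card_eq_zero.mp hn
    have : a = b := by rwa [Finset.symmDiff_eq_empty] at he
    exact this ▸ SimpleGraph.Reachable.refl a
  | succ n ih =>
    have hne : (symmDiff a b).Nonempty := by rw [← Finset.card_pos, hn]; omega
    obtain ⟨l, hl⟩ := hne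
    have hadj : (hypercube k).Adj a (flipV a l) := ⟨l, rfl⟩
    have hset : symmDiff (flipV a l) b = (symmDiff a b).erase l := by
      ext x
      by_cases hx : x = l
      · subst hx
        rcases Finset.mem_symmDiff.mp hl with ⟨h1, h2⟩ | ⟨h1, h2⟩ <;>
          simp [Finset.mem_symmDiff, mem_flipV, h1, h2]
      · simp [Finset.mem_symmDiff, mem_flipV, hx, Finset.mem_erase]
    have hcard : (symmDiff (flipV a l) b).card = n := by
      rw [hset, Finset.card_erase_of_mem hl, hn]
      omega
    exact hadj.reachable.trans (ih _ _ hcard)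

/-- Fetching lemma: if `#φ ≠ |eul(φ)|` then there are satisfying valuations
`ν, ν'` of `φ` with `(-1)^{|ν|} ≠ (-1)^{|ν'|}` and a simple path from `ν` to `ν'` in `G_V`
whose internal vertices do not satisfy `φ`. -/
theorem stmt9 (k : ℕ) (hk : 1 ≤ k) (φ : Finset (Fin (k + 1)) → Bool)
    (h : (satSet φ).card ≠ (eul φ).natAbs) :
    ∃ ν ν' : Finset (Fin (k + 1)), φ ν = true ∧ φ ν' = true ∧
      ((-1 : ℤ) ^ ν.card ≠ (-1 : ℤ) ^ ν'.card) ∧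
      ∃ p : (hypercube k).Walk ν ν', p.IsPath ∧
        ∀ μ ∈ p.support, μ ≠ ν → μ ≠ ν' → φ μ = false := by
  -- Step 1: there is a pair of satisfying valuations with opposite parity.
  have hpair : ∃ a b : Finset (Fin (k + 1)), φ a = true ∧ φ b = true ∧
      ((-1 : ℤ) ^ a.card ≠ (-1 : ℤ) ^ b.card) := by
    by_contra hc
    push_neg at hc
    apply h
    rcases Finset.eq_empty_or_nonempty (satSet φ) with he | ⟨a, ha⟩
    · simp [he, eul]
    · have ha' : φ a = true := by simpa [satSet] using ha
      have heul : eul φ = ((satSet φ).card : ℤ) * ((-1 : ℤ) ^ a.card) := by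
        rw [eul]
        rw [Finset.sum_congr rfl (fun b hb => hc b a (by simpa [satSet] using hb) ha')]
        rw [Finset.sum_const, nsmul_eq_mul]
      rw [heul, Int.natAbs_mul, Int.natAbs_pow]
      simp
  -- Step 2: the set of lengths of suitable paths is nonempty.
  set P : ℕ → Prop := fun n => ∃ a b : Finset (Fin (k + 1)), ∃ p : (hypercube k).Walk a b,
    p.IsPath ∧ φ a = true ∧ φ b = true ∧
    ((-1 : ℤ) ^ a.card ≠ (-1 : ℤ) ^ b.card) ∧ p.length = n with hP
  have hPne : ∃ n, P n := by
    obtain ⟨a, b, ha, hb, hab⟩ := hpair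
    obtain ⟨w⟩ := hypercube_reachable a b
    exact ⟨w.bypass.length, a, b, w.bypass, w.bypass_isPath, ha, hb, hab, rfl⟩
  classical
  obtain ⟨a, b, p, hpath, ha, hb, hab, hlen⟩ := Nat.find_spec hPne
  refine ⟨a, b, ha, hb, hab, p, hpath, ?_⟩
  intro μ hμ hμa hμb
  by_contra hcf
  have hμt : φ μ = true := by
    cases hφμ : φ μ
    · exact absurd hφμ hcf
    · rfl
  -- length facts
  have hsplit : (p.takeUntil μ hμ).length + (p.dropUntil μ hμ).length = p.length := by
    conv_rhs => rw [← p.take_spec hμ]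
    rw [SimpleGraph.Walk.length_append]
  have htake_pos : (p.takeUntil μ hμ).length ≠ 0 := by
    intro h0
    exact hμa ((p.takeUntil μ hμ).eq_of_length_eq_zero h0).symm
  have hdrop_pos : (p.dropUntil μ hμ).length ≠ 0 := by
    intro h0
    exact hμb ((p.dropUntil μ hμ).eq_of_length_eq_zero h0)
  by_cases hpar : (-1 : ℤ) ^ a.card = (-1 : ℤ) ^ μ.card
  · -- μ has the same parity as a, hence opposite to b: use dropUntil
    have hq : P (p.dropUntil μ hμ).length :=
      ⟨μ, b, p.dropUntil μ hμ, hpath.dropUntil hμ, hμt, hb, fun he => hab (hpar.trans he), rfl⟩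
    have : Nat.find hPne ≤ (p.dropUntil μ hμ).length := Nat.find_le hq
    omega
  · -- μ has opposite parity to a: use takeUntil
    have hq : P (p.takeUntil μ hμ).length :=
      ⟨a, μ, p.takeUntil μ hμ, hpath.takeUntil hμ, ha, hμt, hpar, rfl⟩
    have : Nat.find hPne ≤ (p.takeUntil μ hμ).length := Nat.find_le hq
    omega
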